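/- arXiv:1903.00867 — 3 statements merged into one kernel-verified Lean document; each statement's English description precedes it below -/
import Mathlib

section
/- For r > 0 and σ ∈ {1, −1} define v_{r,σ} : ℝ → ℝ by v_{r,σ}(x) = ∫_0^x sinh(r)/(cosh(r) − σ·cos y) dy. Let n ≥ 1, let K ≥ 3 and L ≥ 1 be natural numbers, let r_1,…,r_K > 0, s_1,…,s_L > 0 and σ_1,…,σ_K, τ_1,…,τ_L ∈ {1,−1}. If ξ = (ξ_1,…,ξ_n) ∈ ℝ^n satisfies, for every j ∈ {1,…,n}, the system Σ_{k=1}^K v_{r_k,σ_k}(ξ_j) + Σ_{j′≠j} Σ_{l=1}^L ( v_{s_l,τ_l}(ξ_{j′} + ξ_j) − v_{s_l,τ_l}(ξ_{j′} − ξ_j) ) = 2π(n+1−j), then π > ξ_1 > ξ_2 > … > ξ_n > 0. -/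
open Real Finset

/-- The trigonometric function `v_{r,σ}(x) = ∫_0^x sinh r / (cosh r − σ cos y) dy`. -/
noncomputable def vTrig (r σ x : ℝ) : ℝ :=
  ∫ y in (0:ℝ)..x, Real.sinh r / (Real.cosh r - σ * Real.cos y)

section aux
variable {r σ : ℝ} (hr : 0 < r) (hσ : σ = 1 ∨ σ = -1)

lemma sigma_sq (hσ : σ = 1 ∨ σ = -1) : σ ^ 2 = 1 := by rcases hσ with h | h <;> rw [h] <;> norm_num

lemma denom_pos (hr : 0 < r) (hσ : σ = 1 ∨ σ = -1) (y : ℝ) :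
    0 < Real.cosh r - σ * Real.cos y := by
  have h1 : 1 < Real.cosh r := by
    have := Real.one_lt_cosh (x := r); rw [this]; simpa using hr.ne'
  have h2 : σ * Real.cos y ≤ 1 := by
    rcases hσ with h | h <;> rw [h] <;> nlinarith [Real.neg_one_le_cos y, Real.cos_le_one y]
  linarith

lemma integrand_pos (hr : 0 < r) (hσ : σ = 1 ∨ σ = -1) (y : ℝ) :
    0 < Real.sinh r / (Real.cosh r - σ * Real.cos y) :=
  div_pos (by positivity) (denom_pos hr hσ y)

lemma integrand_cont (hr : 0 < r) (hσ : σ = 1 ∨ σ = -1) :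
    Continuous fun y => Real.sinh r / (Real.cosh r - σ * Real.cos y) := by
  apply continuous_const.div (by continuity)
  intro y; exact (denom_pos hr hσ y).ne'

lemma integrand_intble (hr : 0 < r) (hσ : σ = 1 ∨ σ = -1) (a b : ℝ) :
    IntervalIntegrable (fun y => Real.sinh r / (Real.cosh r - σ * Real.cos y))
      MeasureTheory.volume a b :=
  (integrand_cont hr hσ).intervalIntegrable a b

lemma vTrig_eq (hr : 0 < r) (hσ : σ = 1 ∨ σ = -1) (x : ℝ) :
    vTrig r σ x = x + 2 * arctan (σ * exp (-r) * sin x / (1 - σ * exp (-r) * cos x)) := by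
  set β := σ * exp (-r) with hβdef
  have hβ : β ^ 2 < 1 := by
    have h1 : exp (-r) < 1 := exp_lt_one_iff.mpr (by linarith)
    have h2 : (0:ℝ) < exp (-r) := exp_pos _
    have : β ^ 2 = exp (-r) ^ 2 := by
      rw [hβdef, mul_pow, sigma_sq hσ, one_mul]
    rw [this]; nlinarith
  have hD : ∀ y : ℝ, 0 < 1 - β * Real.cos y := by
    intro y
    nlinarith [Real.neg_one_le_cos y, Real.cos_le_one y, sq_nonneg (β - Real.cos y),
      sq_nonneg (β + Real.cos y), Real.sin_sq_add_cos_sq y]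
  have key : ∀ y : ℝ, HasDerivAt (fun z => z + 2 * arctan (β * sin z / (1 - β * cos z)))
      (Real.sinh r / (Real.cosh r - σ * Real.cos y)) y := by
    intro y
    have h1 : HasDerivAt (fun z => β * sin z) (β * cos y) y := (hasDerivAt_sin y).const_mul β
    have h2 : HasDerivAt (fun z => 1 - β * cos z) (β * sin y) y := by
      have := ((hasDerivAt_cos y).const_mul β).const_sub 1
      simpa using this
    have hq := h1.div h2 (hD y).ne'
    have ha := (Real.hasDerivAt_arctan (β * sin y / (1 - β * cos y))).comp y hq
    have hH := (hasDerivAt_id y).add (ha.const_mul 2)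
    refine hH.congr_deriv (Eq.symm ?_)
    have hd := (hD y).ne'
    have hsc := Real.sin_sq_add_cos_sq y
    have hch : Real.cosh r - σ * Real.cos y
        = (1 - 2 * β * Real.cos y + β ^ 2) / (2 * exp (-r)) := by
      rw [Real.cosh_eq]
      have hσ2 := sigma_sq hσ
      have he : exp r * exp (-r) = 1 := by rw [← Real.exp_add]; simp
      field_simp [hβdef]
      nlinarith [exp_pos (-r), exp_pos r]
    have hsh : Real.sinh r = (1 - β ^ 2) / (2 * exp (-r)) := by
      rw [Real.sinh_eq]
      have hσ2 := sigma_sq hσ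
      have he : exp r * exp (-r) = 1 := by rw [← Real.exp_add]; simp
      field_simp [hβdef]
      nlinarith [exp_pos (-r)]
    have hden2 : 0 < 1 - 2 * β * Real.cos y + β ^ 2 := by
      nlinarith [hD y, sq_nonneg (β - Real.cos y), hsc]
    have h1g : (1 + (β * sin y / (1 - β * cos y)) ^ 2)
        = (1 - 2 * β * Real.cos y + β ^ 2) / (1 - β * cos y) ^ 2 := by
      field_simp
      nlinarith [hsc]
    rw [hch, hsh, h1g]
    have he2 : (0:ℝ) < 2 * exp (-r) := by positivity
    have hE : (1 - β ^ 2) / (2 * rexp (-r)) / ((1 - 2 * β * cos y + β ^ 2) / (2 * rexp (-r)))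
        = (1 - β ^ 2) / (1 - 2 * β * cos y + β ^ 2) := by
      rw [div_div_div_cancel_right₀]
      positivity
    rw [hE]
    clear hch hsh hq ha hH h1 h2 hβdef
    clear_value β
    field_simp
    have hD3 : 1 - β * 2 * cos y + β ^ 2 ≠ 0 := by rw [mul_comm β 2]; exact hden2.ne'
    rw [div_eq_iff hD3, add_mul, div_mul_cancel₀ _ hD3]
    linear_combination (2*β^2) * hsc
  have := intervalIntegral.integral_eq_sub_of_hasDerivAt
      (f := fun z => z + 2 * arctan (β * sin z / (1 - β * cos z)))
      (f' := fun y => Real.sinh r / (Real.cosh r - σ * Real.cos y))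
      (a := 0) (b := x) (fun y _ => key y) (integrand_intble hr hσ 0 x)
  rw [vTrig, this]
  simp

end aux

section aux2
variable {r σ : ℝ}

lemma vTrig_zero : vTrig r σ 0 = 0 := by simp [vTrig]

lemma vTrig_lt (hr : 0 < r) (hσ : σ = 1 ∨ σ = -1) {a b : ℝ} (hab : a < b) :
    vTrig r σ a < vTrig r σ b := by
  have h : vTrig r σ b - vTrig r σ a
      = ∫ y in a..b, Real.sinh r / (Real.cosh r - σ * Real.cos y) := by
    rw [vTrig, vTrig, ← intervalIntegral.integral_interval_sub_left
      (integrand_intble hr hσ 0 b) (integrand_intble hr hσ 0 a)]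
  have hpos := intervalIntegral.intervalIntegral_pos_of_pos
    (integrand_intble hr hσ a b) (integrand_pos hr hσ) hab
  linarith [h ▸ hpos]

lemma vTrig_mono (hr : 0 < r) (hσ : σ = 1 ∨ σ = -1) {a b : ℝ} (hab : a ≤ b) :
    vTrig r σ a ≤ vTrig r σ b := by
  rcases eq_or_lt_of_le hab with h | h
  · rw [h]
  · exact (vTrig_lt hr hσ h).le

lemma vTrig_neg (hr : 0 < r) (hσ : σ = 1 ∨ σ = -1) (x : ℝ) :
    vTrig r σ (-x) = - vTrig r σ x := by
  rw [vTrig_eq hr hσ, vTrig_eq hr hσ, Real.sin_neg, Real.cos_neg]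
  rw [show σ * rexp (-r) * -Real.sin x / (1 - σ * rexp (-r) * Real.cos x)
    = -(σ * rexp (-r) * Real.sin x / (1 - σ * rexp (-r) * Real.cos x)) by ring]
  rw [Real.arctan_neg]; ring

lemma vTrig_pi (hr : 0 < r) (hσ : σ = 1 ∨ σ = -1) : vTrig r σ π = π := by
  rw [vTrig_eq hr hσ]; simp

lemma vTrig_add_two_pi (hr : 0 < r) (hσ : σ = 1 ∨ σ = -1) (x : ℝ) :
    vTrig r σ (x + 2 * π) = vTrig r σ x + 2 * π := by
  rw [vTrig_eq hr hσ, vTrig_eq hr hσ, Real.sin_add_two_pi, Real.cos_add_two_pi]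
  ring

lemma vTrig_nonpos (hr : 0 < r) (hσ : σ = 1 ∨ σ = -1) {x : ℝ} (hx : x ≤ 0) :
    vTrig r σ x ≤ 0 := by
  have := vTrig_mono hr hσ hx
  rwa [vTrig_zero] at this

end aux2

/-- Any solution of the trigonometric type B Bethe system at `α = 0`, `ε = 0`,
`μ = ρ` satisfies `π > ξ_1 > ξ_2 > ⋯ > ξ_n > 0`. -/
theorem trigB_solution_ordering
    (n K L : ℕ) (hn : 1 ≤ n) (hK : 3 ≤ K) (hL : 1 ≤ L)
    (r : Fin K → ℝ) (σ : Fin K → ℝ) (s : Fin L → ℝ) (τ : Fin L → ℝ)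
    (hr : ∀ k, 0 < r k) (hs : ∀ l, 0 < s l)
    (hσ : ∀ k, σ k = 1 ∨ σ k = -1) (hτ : ∀ l, τ l = 1 ∨ τ l = -1)
    (ξ : Fin n → ℝ)
    (hξ : ∀ j : Fin n,
      (∑ k, vTrig (r k) (σ k) (ξ j)) +
      (∑ j' ∈ Finset.univ.erase j, ∑ l,
        (vTrig (s l) (τ l) (ξ j' + ξ j) - vTrig (s l) (τ l) (ξ j' - ξ j)))
      = 2 * π * ((n : ℝ) - j.val)) :
    (∀ j j' : Fin n, j < j' → ξ j' < ξ j) ∧ (∀ j : Fin n, 0 < ξ j ∧ ξ j < π) := by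
  have hπ := Real.pi_pos
  -- Step 1: ordering
  have ord : ∀ j j' : Fin n, j < j' → ξ j' < ξ j := by
    intro j j' hjj'
    by_contra hcon
    push_neg at hcon  -- ξ j ≤ ξ j'
    have hne : j' ≠ j := (Fin.ne_of_lt hjj').symm
    have e1 := hξ j
    have e2 := hξ j'
    have hj'mem : j' ∈ Finset.univ.erase j := by simp [hne]
    have hjmem : j ∈ Finset.univ.erase j' := by simp [hne.symm]
    rw [← Finset.add_sum_erase _ _ hj'mem] at e1
    rw [← Finset.add_sum_erase _ _ hjmem, Finset.erase_right_comm] at e2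
    have h1 : ∑ k, vTrig (r k) (σ k) (ξ j) ≤ ∑ k, vTrig (r k) (σ k) (ξ j') :=
      Finset.sum_le_sum fun k _ => vTrig_mono (hr k) (hσ k) hcon
    have h2 : ∑ m ∈ (Finset.univ.erase j).erase j', ∑ l,
          (vTrig (s l) (τ l) (ξ m + ξ j) - vTrig (s l) (τ l) (ξ m - ξ j))
        ≤ ∑ m ∈ (Finset.univ.erase j).erase j', ∑ l,
          (vTrig (s l) (τ l) (ξ m + ξ j') - vTrig (s l) (τ l) (ξ m - ξ j')) := by
      refine Finset.sum_le_sum fun m _ => Finset.sum_le_sum fun l _ => ?_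
      have ha := vTrig_mono (hs l) (hτ l) (by linarith : ξ m + ξ j ≤ ξ m + ξ j')
      have hb := vTrig_mono (hs l) (hτ l) (by linarith : ξ m - ξ j' ≤ ξ m - ξ j)
      linarith
    have h3 : ∑ l, (vTrig (s l) (τ l) (ξ j' + ξ j) - vTrig (s l) (τ l) (ξ j' - ξ j))
        ≤ ∑ l, (vTrig (s l) (τ l) (ξ j + ξ j') - vTrig (s l) (τ l) (ξ j - ξ j')) := by
      refine Finset.sum_le_sum fun l _ => ?_
      have hc : ξ j' + ξ j = ξ j + ξ j' := by ring
      have hb := vTrig_mono (hs l) (hτ l) (by linarith : ξ j - ξ j' ≤ ξ j' - ξ j)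
      rw [hc]; linarith
    have key : 2 * π * ((n : ℝ) - j.val) ≤ 2 * π * ((n : ℝ) - j'.val) := by
      rw [← e1, ← e2]; linarith
    have hv : (j.val : ℝ) < j'.val := by exact_mod_cast hjj'
    nlinarith
  -- Step 2: positivity
  have pos : ∀ j : Fin n, 0 < ξ j := by
    intro j
    by_contra hcon
    push_neg at hcon  -- ξ j ≤ 0
    have e := hξ j
    have h1 : ∑ k, vTrig (r k) (σ k) (ξ j) ≤ 0 :=
      Finset.sum_nonpos fun k _ => vTrig_nonpos (hr k) (hσ k) hcon
    have h2 : ∑ m ∈ Finset.univ.erase j, ∑ l,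
        (vTrig (s l) (τ l) (ξ m + ξ j) - vTrig (s l) (τ l) (ξ m - ξ j)) ≤ 0 := by
      refine Finset.sum_nonpos fun m _ => Finset.sum_nonpos fun l _ => ?_
      have := vTrig_mono (hs l) (hτ l) (by linarith : ξ m + ξ j ≤ ξ m - ξ j)
      linarith
    have hj : (j.val : ℝ) ≤ (n : ℝ) - 1 := by
      have := j.2
      have : (j.val : ℝ) + 1 ≤ (n : ℝ) := by exact_mod_cast this
      linarith
    nlinarith
  -- Step 3: upper bound for the first coordinate
  set j0 : Fin n := ⟨0, hn⟩ with hj0def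
  have upper0 : ξ j0 < π := by
    by_contra hcon
    push_neg at hcon  -- π ≤ ξ j0
    have e := hξ j0
    have h1 : (K : ℝ) * π ≤ ∑ k, vTrig (r k) (σ k) (ξ j0) := by
      calc (K : ℝ) * π = ∑ _k : Fin K, π := by
            rw [Finset.sum_const, Finset.card_univ, Fintype.card_fin, nsmul_eq_mul]
        _ ≤ _ := Finset.sum_le_sum fun k _ => by
            rw [← vTrig_pi (hr k) (hσ k)]
            exact vTrig_mono (hr k) (hσ k) hcon
    have h2 : ∀ m : Fin n, 2 * π ≤ ∑ l,
        (vTrig (s l) (τ l) (ξ m + ξ j0) - vTrig (s l) (τ l) (ξ m - ξ j0)) := by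
      intro m
      calc 2 * π ≤ (L : ℝ) * (2 * π) := by
            have h1L : (1 : ℝ) ≤ (L : ℝ) := by exact_mod_cast hL
            nlinarith
        _ = ∑ _l : Fin L, 2 * π := by
            rw [Finset.sum_const, Finset.card_univ, Fintype.card_fin, nsmul_eq_mul]
        _ ≤ _ := Finset.sum_le_sum fun l _ => by
            have ha := vTrig_mono (hs l) (hτ l)
              (by linarith : ξ m - ξ j0 + 2 * π ≤ ξ m + ξ j0)
            rw [vTrig_add_two_pi (hs l) (hτ l)] at ha
            linarith
    have h3 : ((n : ℝ) - 1) * (2 * π) ≤ ∑ m ∈ Finset.univ.erase j0, ∑ l,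
        (vTrig (s l) (τ l) (ξ m + ξ j0) - vTrig (s l) (τ l) (ξ m - ξ j0)) := by
      calc ((n : ℝ) - 1) * (2 * π) = ∑ _m ∈ Finset.univ.erase j0, 2 * π := by
            rw [Finset.sum_const, Finset.card_erase_of_mem (Finset.mem_univ _),
              Finset.card_univ, Fintype.card_fin, nsmul_eq_mul]
            push_cast [Nat.cast_sub hn]
            ring
        _ ≤ _ := Finset.sum_le_sum fun m _ => h2 m
    have hK3 : (3 : ℝ) ≤ (K : ℝ) := by exact_mod_cast hK
    have hj0 : (j0.val : ℝ) = 0 := by rw [hj0def]; norm_num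
    rw [hj0] at e
    nlinarith
  refine ⟨ord, fun j => ⟨pos j, ?_⟩⟩
  rcases eq_or_ne j j0 with h | h
  · rwa [h]
  · have hlt : j0 < j := by
      have hv0 : j0.val = 0 := by rw [hj0def]
      have hne : j.val ≠ 0 := fun hc => h (Fin.ext (by rw [hc, hv0]))
      exact Fin.lt_def.mpr (by omega)
    exact lt_trans (ord j0 j hlt) upper0
end

section
/- For a > 0 define v_a : ℝ → ℝ by v_a(x) = 2·arctan(x/a). Let n ≥ 1, let K, L ≥ 0 be natural numbers, let α > 0, β ∈ [0,1), a_1,…,a_K > 0, b_1,…,b_L > 0, and let μ = (μ_1,…,μ_n) ∈ ℤ^n with μ_1 > μ_2 > … > μ_n. Then there exists a unique ξ = (ξ_1,…,ξ_n) ∈ ℝ^n satisfying, for every j ∈ {1,…,n}, the system α ξ_j + Σ_{k=1}^K v_{a_k}(ξ_j) + Σ_{j′≠j} Σ_{l=1}^L v_{b_l}(ξ_j − ξ_{j′}) = 2π(μ_j + β). -/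
open Real Finset

/-- The rational function `v_a(x) = 2 arctan(x/a)`. -/
noncomputable def vRat (a x : ℝ) : ℝ := 2 * Real.arctan (x / a)

/-- An explicit antiderivative of `vRat a`. -/
noncomputable def FInt (a x : ℝ) : ℝ := 2*x*Real.arctan (x/a) - a * Real.log (1 + (x/a)^2)

lemma hasDerivAt_FInt {a : ℝ} (ha : 0 < a) (x : ℝ) : HasDerivAt (FInt a) (vRat a x) x := by
  have h0 : (1 + (x/a)^2) ≠ 0 := by positivity
  have h1 : HasDerivAt (fun t : ℝ => t / a) (1/a) x := by
    simpa using (hasDerivAt_id x).div_const a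
  have h2 : HasDerivAt (fun t : ℝ => Real.arctan (t/a)) (1/(1+(x/a)^2) * (1/a)) x :=
    by have := (Real.hasDerivAt_arctan (x/a)).comp x h1; exact this
  have h3 : HasDerivAt (fun t : ℝ => 2*t) 2 x := by
    simpa using (hasDerivAt_id x).const_mul (2:ℝ)
  have h4 := h3.mul h2
  have h5 : HasDerivAt (fun t : ℝ => 1 + (t/a)^2) ((2:ℕ) * (x/a)^1 * (1/a)) x :=
    (h1.pow 2).const_add 1
  have h6 := (h5.log h0).const_mul a
  have h7 := h4.sub h6
  convert h7 using 1
  · rfl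
  · rfl
  · rfl
  unfold vRat
  have ha' : a ≠ 0 := ne_of_gt ha
  field_simp
  ring

lemma vRat_neg (a x : ℝ) : vRat a (-x) = - vRat a x := by
  simp [vRat, neg_div, Real.arctan_neg]

lemma vRat_mono {a : ℝ} (ha : 0 < a) : Monotone (vRat a) := by
  intro x y hxy
  unfold vRat
  have h1 : x / a ≤ y / a := by gcongr
  have := Real.arctan_strictMono.monotone h1
  linarith

lemma vRat_nonneg {a x : ℝ} (ha : 0 < a) (hx : 0 ≤ x) : 0 ≤ vRat a x := by
  have := vRat_mono ha hx
  simpa [vRat] using this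

lemma FInt_even (a x : ℝ) : FInt a (-x) = FInt a x := by
  simp [FInt, neg_div, Real.arctan_neg]

lemma continuous_FInt {a : ℝ} (ha : 0 < a) : Continuous (FInt a) :=
  Differentiable.continuous (fun x => (hasDerivAt_FInt ha x).differentiableAt)

lemma FInt_zero (a : ℝ) : FInt a 0 = 0 := by simp [FInt]

lemma FInt_nonneg {a : ℝ} (ha : 0 < a) (x : ℝ) : 0 ≤ FInt a x := by
  have hmono : MonotoneOn (FInt a) (Set.Ici 0) := by
    apply monotoneOn_of_deriv_nonneg (convex_Ici 0) (continuous_FInt ha).continuousOn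
    · intro t _
      exact (hasDerivAt_FInt ha t).differentiableAt.differentiableWithinAt
    · intro t ht
      rw [interior_Ici] at ht
      rw [(hasDerivAt_FInt ha t).deriv]
      exact vRat_nonneg ha (le_of_lt ht)
  have key : ∀ t : ℝ, 0 ≤ t → 0 ≤ FInt a t := by
    intro t ht
    have := hmono (Set.self_mem_Ici) (Set.mem_Ici.mpr ht) ht
    rwa [FInt_zero] at this
  rcases le_total 0 x with h | h
  · exact key x h
  · rw [← FInt_even]
    exact key (-x) (by linarith)

/-- The Morse potential whose critical points are the solutions of the system. -/
noncomputable def VV {n K L : ℕ} (α β : ℝ) (a : Fin K → ℝ) (b : Fin L → ℝ)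
    (μ : Fin n → ℤ) (ξ : Fin n → ℝ) : ℝ :=
  (∑ j, (α/2 * ξ j^2 - 2*π*((μ j : ℝ)+β) * ξ j + ∑ k, FInt (a k) (ξ j)))
  + (1/2) * ∑ j, ∑ j' ∈ Finset.univ.erase j, ∑ l, FInt (b l) (ξ j - ξ j')

lemma continuous_VV {n K L : ℕ} (α β : ℝ) (a : Fin K → ℝ) (b : Fin L → ℝ)
    (μ : Fin n → ℤ) (ha : ∀ k, 0 < a k) (hb : ∀ l, 0 < b l) :
    Continuous (VV α β a b μ) := by
  unfold VV
  apply Continuous.add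
  · apply continuous_finset_sum
    intro j _
    exact ((continuous_const.mul ((continuous_apply j).pow 2)).sub
      (continuous_const.mul (continuous_apply j))).add
      (continuous_finset_sum _ fun k _ => (continuous_FInt (ha k)).comp (continuous_apply j))
  · exact continuous_const.mul (continuous_finset_sum _ fun j _ =>
      continuous_finset_sum _ fun j' _ => continuous_finset_sum _ fun l _ =>
        (continuous_FInt (hb l)).comp ((continuous_apply j).sub (continuous_apply j')))

lemma VV_lower {n K L : ℕ} (hn : 1 ≤ n) (α β : ℝ) (hα : 0 < α) (a : Fin K → ℝ) (b : Fin L → ℝ)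
    (μ : Fin n → ℤ) (ha : ∀ k, 0 < a k) (hb : ∀ l, 0 < b l) (ξ : Fin n → ℝ) :
    α/2 * ‖ξ‖^2 - (∑ j, |2*π*((μ j : ℝ)+β)|) * ‖ξ‖ ≤ VV α β a b μ ξ := by
  haveI : Nonempty (Fin n) := ⟨⟨0, hn⟩⟩
  obtain ⟨j0, _, hj0⟩ := Finset.exists_max_image (univ : Finset (Fin n)) (fun j => |ξ j|)
    Finset.univ_nonempty
  have hnorm : ‖ξ‖ ≤ |ξ j0| := by
    apply (pi_norm_le_iff_of_nonneg (abs_nonneg _)).mpr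
    intro i
    simpa [Real.norm_eq_abs] using hj0 i (Finset.mem_univ i)
  have hq : α/2 * ‖ξ‖^2 ≤ ∑ j, α/2 * ξ j ^2 := by
    have h1 : ‖ξ‖^2 ≤ ξ j0 ^ 2 := by
      rw [← sq_abs (ξ j0)]
      exact pow_le_pow_left₀ (norm_nonneg _) hnorm 2
    have h2 : ξ j0 ^2 ≤ ∑ j, ξ j ^2 :=
      Finset.single_le_sum (fun j _ => sq_nonneg (ξ j)) (Finset.mem_univ j0)
    have := mul_le_mul_of_nonneg_left (le_trans h1 h2) (by positivity : (0:ℝ) ≤ α/2)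
    rw [Finset.mul_sum] at this
    exact this
  have hl : ∑ j, 2*π*((μ j : ℝ)+β) * ξ j ≤ (∑ j, |2*π*((μ j : ℝ)+β)|) * ‖ξ‖ := by
    rw [Finset.sum_mul]
    apply Finset.sum_le_sum
    intro j _
    calc 2*π*((μ j : ℝ)+β) * ξ j ≤ |2*π*((μ j : ℝ)+β) * ξ j| := le_abs_self _
      _ = |2*π*((μ j : ℝ)+β)| * |ξ j| := abs_mul _ _
      _ ≤ |2*π*((μ j : ℝ)+β)| * ‖ξ‖ := by
          apply mul_le_mul_of_nonneg_left _ (abs_nonneg _)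
          simpa [Real.norm_eq_abs] using norm_le_pi_norm ξ j
  have hFa : ∀ j : Fin n, (0:ℝ) ≤ ∑ k, FInt (a k) (ξ j) := fun j =>
    Finset.sum_nonneg fun k _ => FInt_nonneg (ha k) _
  have hFb : (0:ℝ) ≤ ∑ j, ∑ j' ∈ Finset.univ.erase j, ∑ l, FInt (b l) (ξ j - ξ j') :=
    Finset.sum_nonneg fun j _ => Finset.sum_nonneg fun j' _ =>
      Finset.sum_nonneg fun l _ => FInt_nonneg (hb l) _
  unfold VV
  have hsum : ∑ j, (α/2 * ξ j^2 - 2*π*((μ j : ℝ)+β) * ξ j + ∑ k, FInt (a k) (ξ j))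
      ≥ (∑ j, α/2 * ξ j^2) - ∑ j, 2*π*((μ j : ℝ)+β) * ξ j := by
    rw [← Finset.sum_sub_distrib]
    apply Finset.sum_le_sum
    intro j _
    have := hFa j
    linarith
  linarith

open Filter in
lemma VV_coercive {n K L : ℕ} (hn : 1 ≤ n) (α β : ℝ) (hα : 0 < α) (a : Fin K → ℝ)
    (b : Fin L → ℝ) (μ : Fin n → ℤ) (ha : ∀ k, 0 < a k) (hb : ∀ l, 0 < b l) :
    Tendsto (VV α β a b μ) (cocompact (Fin n → ℝ)) atTop := by
  set C := ∑ j, |2*π*((μ j : ℝ)+β)| with hC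
  have hq : Tendsto (fun r : ℝ => α/2 * r^2 - C*r) atTop atTop := by
    have heq : (fun r : ℝ => α/2 * r^2 - C*r) = fun r => r * (α/2 * r - C) := by
      funext r; ring
    rw [heq]
    exact tendsto_id.atTop_mul_atTop₀
      (tendsto_atTop_add_const_right _ _ (tendsto_id.const_mul_atTop (by positivity)))
  apply tendsto_atTop_mono (VV_lower hn α β hα a b μ ha hb)
  exact hq.comp tendsto_norm_cocompact_atTop

lemma hasDerivAt_VV_update {n K L : ℕ} (α β : ℝ) (a : Fin K → ℝ) (b : Fin L → ℝ)
    (μ : Fin n → ℤ) (ha : ∀ k, 0 < a k) (hb : ∀ l, 0 < b l) (ξ : Fin n → ℝ) (j : Fin n) :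
    HasDerivAt (fun t => VV α β a b μ (Function.update ξ j t))
      ((α * ξ j - 2*π*((μ j : ℝ)+β) + ∑ k, vRat (a k) (ξ j))
        + ∑ j' ∈ Finset.univ.erase j, ∑ l, vRat (b l) (ξ j - ξ j')) (ξ j) := by
  classical
  set c : Fin n → ℝ := fun p => 2*π*((μ p : ℝ)+β) with hc
  have hA : HasDerivAt
      (fun t => ∑ p, (α/2 * (Function.update ξ j t p)^2
          - c p * (Function.update ξ j t p) + ∑ k, FInt (a k) (Function.update ξ j t p)))
      (∑ p, if p = j then α * ξ j - c j + ∑ k, vRat (a k) (ξ j) else 0) (ξ j) := by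
    apply HasDerivAt.fun_sum
    intro p _
    by_cases hp : p = j
    · subst hp
      rw [if_pos rfl]
      simp only [Function.update_self]
      have h1 : HasDerivAt (fun t : ℝ => α/2 * t^2 - c p * t + ∑ k, FInt (a k) t)
          ((α/2) * ((2:ℕ) * ξ p ^ 1) - c p * 1 + ∑ k, vRat (a k) (ξ p)) (ξ p) :=
        (((hasDerivAt_pow 2 (ξ p)).const_mul (α/2)).sub
          ((hasDerivAt_id (ξ p)).const_mul (c p))).add
          (HasDerivAt.fun_sum fun k _ => hasDerivAt_FInt (ha k) (ξ p))
      convert h1 using 1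
      · rfl
      · rfl
      push_cast
      ring
    · rw [if_neg hp]
      simp only [Function.update_of_ne hp]
      exact hasDerivAt_const _ _
  have hB : HasDerivAt
      (fun t => ∑ p, ∑ q ∈ Finset.univ.erase p, ∑ l,
          FInt (b l) (Function.update ξ j t p - Function.update ξ j t q))
      (∑ p, ∑ q ∈ Finset.univ.erase p,
        (if p = j then ∑ l, vRat (b l) (ξ j - ξ q)
         else if q = j then ∑ l, vRat (b l) (ξ j - ξ p) else 0)) (ξ j) := by
    apply HasDerivAt.fun_sum
    intro p _
    apply HasDerivAt.fun_sum
    intro q hq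
    have hqp : q ≠ p := Finset.ne_of_mem_erase hq
    by_cases hp : p = j
    · subst hp
      rw [if_pos rfl]
      simp only [Function.update_self, Function.update_of_ne hqp]
      apply HasDerivAt.fun_sum
      intro l _
      have h := (hasDerivAt_FInt (hb l) (ξ p - ξ q)).comp (ξ p)
        ((hasDerivAt_id (ξ p)).sub_const (ξ q))
      simp only [mul_one] at h
      exact h
    · by_cases hqj : q = j
      · subst hqj
        rw [if_neg hp, if_pos rfl]
        simp only [Function.update_self, Function.update_of_ne hp]
        apply HasDerivAt.fun_sum
        intro l _
        have h := (hasDerivAt_FInt (hb l) (ξ p - ξ q)).comp (ξ q)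
          ((hasDerivAt_id (ξ q)).const_sub (ξ p))
        have heq : vRat (b l) (ξ q - ξ p) = vRat (b l) (ξ p - ξ q) * (-1) := by
          rw [show ξ q - ξ p = -(ξ p - ξ q) by ring, vRat_neg]; ring
        rw [heq]
        exact h
      · rw [if_neg hp, if_neg hqj]
        simp only [Function.update_of_ne hp, Function.update_of_ne hqj]
        exact hasDerivAt_const _ _
  have hAB := hA.add (hB.const_mul (1/2 : ℝ))
  have hfun : (fun t => VV α β a b μ (Function.update ξ j t)) =
      (fun t => (∑ p, (α/2 * (Function.update ξ j t p)^2
          - c p * (Function.update ξ j t p) + ∑ k, FInt (a k) (Function.update ξ j t p)))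
        + (1/2) * ∑ p, ∑ q ∈ Finset.univ.erase p, ∑ l,
            FInt (b l) (Function.update ξ j t p - Function.update ξ j t q)) := by
    funext t; rfl
  rw [hfun]
  convert hAB using 1
  · rfl
  · rfl
  · rfl
  have e1 : (∑ p, if p = j then α * ξ j - c j + ∑ k, vRat (a k) (ξ j) else 0)
      = α * ξ j - c j + ∑ k, vRat (a k) (ξ j) := by
    rw [Finset.sum_ite_eq' Finset.univ j (fun _ => α * ξ j - c j + ∑ k, vRat (a k) (ξ j))]
    simp
  have e2 : (∑ p, ∑ q ∈ Finset.univ.erase p,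
        (if p = j then ∑ l, vRat (b l) (ξ j - ξ q)
         else if q = j then ∑ l, vRat (b l) (ξ j - ξ p) else 0))
      = (∑ q ∈ Finset.univ.erase j, ∑ l, vRat (b l) (ξ j - ξ q))
        + (∑ q ∈ Finset.univ.erase j, ∑ l, vRat (b l) (ξ j - ξ q)) := by
    rw [← Finset.add_sum_erase _ _ (Finset.mem_univ j)]
    congr 1
    · apply Finset.sum_congr rfl
      intro q _
      rw [if_pos rfl]
    · apply Finset.sum_congr rfl
      intro p hp
      have hpj : p ≠ j := Finset.ne_of_mem_erase hp
      simp only [if_neg hpj]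
      rw [Finset.sum_ite_eq' (Finset.univ.erase p) j (fun _ => ∑ l, vRat (b l) (ξ j - ξ p))]
      rw [if_pos (Finset.mem_erase.mpr ⟨Ne.symm hpj, Finset.mem_univ j⟩)]
  rw [e1, e2]
  ring

/-- Existence and uniqueness of the solution of the rational type A Bethe
critical-point system. -/
theorem ratA_exists_unique
    (n K L : ℕ) (hn : 1 ≤ n)
    (α β : ℝ) (hα : 0 < α) (hβ0 : 0 ≤ β) (hβ1 : β < 1)
    (a : Fin K → ℝ) (b : Fin L → ℝ)
    (ha : ∀ k, 0 < a k) (hb : ∀ l, 0 < b l)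
    (μ : Fin n → ℤ) (hμ : ∀ j j' : Fin n, j < j' → μ j' < μ j) :
    ∃! ξ : Fin n → ℝ, ∀ j : Fin n,
      α * ξ j + (∑ k, vRat (a k) (ξ j)) +
      (∑ j' ∈ Finset.univ.erase j, ∑ l, vRat (b l) (ξ j - ξ j'))
      = 2 * π * ((μ j : ℝ) + β) := by
  classical
  haveI : Nonempty (Fin n) := ⟨⟨0, hn⟩⟩
  -- comparison lemma for uniqueness
  have key : ∀ x y : Fin n → ℝ,
      (∀ j, α * x j + (∑ k, vRat (a k) (x j)) +
        (∑ j' ∈ Finset.univ.erase j, ∑ l, vRat (b l) (x j - x j'))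
        = 2 * π * ((μ j : ℝ) + β)) →
      (∀ j, α * y j + (∑ k, vRat (a k) (y j)) +
        (∑ j' ∈ Finset.univ.erase j, ∑ l, vRat (b l) (y j - y j'))
        = 2 * π * ((μ j : ℝ) + β)) →
      ∀ j, x j ≤ y j := by
    intro x y hx hy
    obtain ⟨j0, _, hmax⟩ := Finset.exists_max_image (univ : Finset (Fin n))
      (fun j => x j - y j) Finset.univ_nonempty
    suffices hs : x j0 - y j0 ≤ 0 by
      intro j
      have := hmax j (Finset.mem_univ j)
      linarith
    by_contra hpos
    push_neg at hpos
    have hxy : y j0 ≤ x j0 := by linarith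
    have h1 : ∑ k, vRat (a k) (y j0) ≤ ∑ k, vRat (a k) (x j0) :=
      Finset.sum_le_sum fun k _ => vRat_mono (ha k) hxy
    have h2 : ∑ j' ∈ Finset.univ.erase j0, ∑ l, vRat (b l) (y j0 - y j')
        ≤ ∑ j' ∈ Finset.univ.erase j0, ∑ l, vRat (b l) (x j0 - x j') := by
      apply Finset.sum_le_sum
      intro q _
      apply Finset.sum_le_sum
      intro l _
      apply vRat_mono (hb l)
      have := hmax q (Finset.mem_univ q)
      linarith
    have hEx := hx j0
    have hEy := hy j0
    have hprod : α * x j0 - α * y j0 = α * (x j0 - y j0) := by ring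
    have := mul_pos hα hpos
    linarith
  -- existence via the global minimum of VV
  obtain ⟨ξ, hξ⟩ := (continuous_VV α β a b μ ha hb).exists_forall_le
    (VV_coercive hn α β hα a b μ ha hb)
  have hsol : ∀ j : Fin n,
      α * ξ j + (∑ k, vRat (a k) (ξ j)) +
      (∑ j' ∈ Finset.univ.erase j, ∑ l, vRat (b l) (ξ j - ξ j'))
      = 2 * π * ((μ j : ℝ) + β) := by
    intro j
    have hderiv := hasDerivAt_VV_update α β a b μ ha hb ξ j
    have hloc : IsLocalMin (fun t => VV α β a b μ (Function.update ξ j t)) (ξ j) := by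
      apply Filter.Eventually.of_forall
      intro t
      simpa [Function.update_eq_self] using hξ (Function.update ξ j t)
    have h0 := hloc.hasDerivAt_eq_zero hderiv
    linarith
  refine ⟨ξ, hsol, ?_⟩
  intro y hy
  funext j
  exact le_antisymm (key y ξ hy hsol j) (key ξ y hsol hy j)
end

section
/- For r > 0 and σ ∈ {1, −1} define v_{r,σ} : ℝ → ℝ by v_{r,σ}(x) = ∫_0^x sinh(r)/(cosh(r) − σ·cos y) dy. Let n ≥ 1, let K, L ≥ 0 be natural numbers, let α > 0, β ∈ [0,1), r_1,…,r_K > 0, s_1,…,s_L > 0 and σ_1,…,σ_K, τ_1,…,τ_L ∈ {1,−1}, and let μ = (μ_1,…,μ_n) ∈ ℤ^n with μ_1 > μ_2 > … > μ_n. If ξ = (ξ_1,…,ξ_n) ∈ ℝ^n satisfies, for every j ∈ {1,…,n}, the equation α ξ_j + Σ_{k=1}^K v_{r_k,σ_k}(ξ_j) + Σ_{j′≠j} Σ_{l=1}^L v_{s_l,τ_l}(ξ_j − ξ_{j′}) = 2π(μ_j + β), then for all 1 ≤ j < j′ ≤ n one has 2π(μ_j − μ_{j′})/(α + κ₋) ≤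 ξ_j − ξ_{j′} ≤ 2π(μ_j − μ_{j′})/(α + κ₊), where κ₋ = Σ_{k=1}^K coth(r_k/2) + n Σ_{l=1}^L coth(s_l/2) and κ₊ = Σ_{k=1}^K tanh(r_k/2) + n Σ_{l=1}^L tanh(s_l/2). -/
open Real Finset

lemma denomPos {r σ : ℝ} (hr : 0 < r) (hσ : σ = 1 ∨ σ = -1) (y : ℝ) :
    0 < Real.cosh r - σ * Real.cos y := by
  have h1 : 1 < Real.cosh r := Real.one_lt_cosh.2 hr.ne'
  have h2 : σ * Real.cos y ≤ 1 := by
    rcases hσ with h | h <;> rw [h] <;>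
      nlinarith [Real.neg_one_le_cos y, Real.cos_le_one y]
  linarith

lemma fBounds {r σ : ℝ} (hr : 0 < r) (hσ : σ = 1 ∨ σ = -1) (y : ℝ) :
    Real.tanh (r/2) ≤ Real.sinh r / (Real.cosh r - σ * Real.cos y) ∧
    Real.sinh r / (Real.cosh r - σ * Real.cos y) ≤ (Real.tanh (r/2))⁻¹ := by
  have hd := denomPos hr hσ y
  have hs : 0 < Real.sinh (r/2) := Real.sinh_pos_iff.2 (by linarith)
  have hc : 0 < Real.cosh (r/2) := Real.cosh_pos _
  have hhalf : r/2 + r/2 = r := by ring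
  have hsa := Real.sinh_add (r/2) (r/2)
  have hca := Real.cosh_add (r/2) (r/2)
  rw [hhalf] at hsa hca
  have hsinh : Real.sinh r = 2 * Real.sinh (r/2) * Real.cosh (r/2) := by
    rw [hsa]; ring
  have hcosh : Real.cosh r = 2 * Real.cosh (r/2)^2 - 1 := by
    have h := Real.cosh_sq_sub_sinh_sq (r/2)
    rw [hca]; nlinarith
  have hcs : Real.cosh (r/2)^2 = Real.sinh (r/2)^2 + 1 := by
    nlinarith [Real.cosh_sq_sub_sinh_sq (r/2)]
  have htanh : Real.tanh (r/2) = Real.sinh (r/2) / Real.cosh (r/2) :=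
    Real.tanh_eq_sinh_div_cosh _
  have hb1 : -1 ≤ σ * Real.cos y := by
    rcases hσ with h | h <;> rw [h] <;>
      nlinarith [Real.neg_one_le_cos y, Real.cos_le_one y]
  have hb2 : σ * Real.cos y ≤ 1 := by
    rcases hσ with h | h <;> rw [h] <;>
      nlinarith [Real.neg_one_le_cos y, Real.cos_le_one y]
  constructor
  · rw [htanh, div_le_div_iff₀ hc hd]
    nlinarith
  · rw [htanh, inv_div, div_le_div_iff₀ hd hs]
    nlinarith

lemma fCont {r σ : ℝ} (hr : 0 < r) (hσ : σ = 1 ∨ σ = -1) :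
    Continuous (fun y => Real.sinh r / (Real.cosh r - σ * Real.cos y)) :=
  continuous_const.div (by continuity) (fun y => (denomPos hr hσ y).ne')

lemma vTrig_sub {r σ : ℝ} (hr : 0 < r) (hσ : σ = 1 ∨ σ = -1) (x y : ℝ) :
    vTrig r σ x - vTrig r σ y
      = ∫ t in y..x, Real.sinh r / (Real.cosh r - σ * Real.cos t) := by
  unfold vTrig
  exact intervalIntegral.integral_interval_sub_left
    ((fCont hr hσ).intervalIntegrable _ _) ((fCont hr hσ).intervalIntegrable _ _)

lemma vTrig_diff_bounds {r σ : ℝ} (hr : 0 < r) (hσ : σ = 1 ∨ σ = -1) {x y : ℝ}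
    (hxy : y ≤ x) :
    Real.tanh (r/2) * (x - y) ≤ vTrig r σ x - vTrig r σ y ∧
    vTrig r σ x - vTrig r σ y ≤ (Real.tanh (r/2))⁻¹ * (x - y) := by
  rw [vTrig_sub hr hσ]
  constructor
  · have := intervalIntegral.integral_mono_on hxy (continuous_const.intervalIntegrable (μ := MeasureTheory.volume) _ _)
      ((fCont hr hσ).intervalIntegrable _ _)
      (fun t _ => (fBounds hr hσ t).1)
    simpa [mul_comm] using this
  · have := intervalIntegral.integral_mono_on hxy
      ((fCont hr hσ).intervalIntegrable _ _) (continuous_const.intervalIntegrable (μ := MeasureTheory.volume) _ _)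
      (fun t _ => (fBounds hr hσ t).2)
    simpa [mul_comm] using this


/-- Trigonometric Bethe bounds of type A: gap estimates for the solutions of the
trigonometric type A critical-point system. -/
theorem trigA_gap_bounds
    (n K L : ℕ) (hn : 1 ≤ n)
    (α β : ℝ) (hα : 0 < α) (hβ0 : 0 ≤ β) (hβ1 : β < 1)
    (r : Fin K → ℝ) (σ : Fin K → ℝ) (s : Fin L → ℝ) (τ : Fin L → ℝ)
    (hr : ∀ k, 0 < r k) (hs : ∀ l, 0 < s l)
    (hσ : ∀ k, σ k = 1 ∨ σ k = -1) (hτ : ∀ l, τ l = 1 ∨ τ l = -1)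
    (μ : Fin n → ℤ) (hμ : ∀ j j' : Fin n, j < j' → μ j' < μ j)
    (ξ : Fin n → ℝ)
    (hξ : ∀ j : Fin n,
      α * ξ j + (∑ k, vTrig (r k) (σ k) (ξ j)) +
      (∑ j' ∈ Finset.univ.erase j, ∑ l, vTrig (s l) (τ l) (ξ j - ξ j'))
      = 2 * π * ((μ j : ℝ) + β))
    (κm κp : ℝ)
    (hκm : κm = (∑ k, (Real.tanh (r k / 2))⁻¹) +
      (n : ℝ) * (∑ l, (Real.tanh (s l / 2))⁻¹))
    (hκp : κp = (∑ k, Real.tanh (r k / 2)) +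
      (n : ℝ) * (∑ l, Real.tanh (s l / 2))) :
    ∀ j j' : Fin n, j < j' →
      2 * π * ((μ j : ℝ) - (μ j' : ℝ)) / (α + κm) ≤ ξ j - ξ j' ∧
      ξ j - ξ j' ≤ 2 * π * ((μ j : ℝ) - (μ j' : ℝ)) / (α + κp) := by
  -- positivity of tanh factors
  have htr : ∀ k, 0 < Real.tanh (r k / 2) := fun k => by
    rw [Real.tanh_eq_sinh_div_cosh]
    exact div_pos (Real.sinh_pos_iff.2 (by linarith [hr k])) (Real.cosh_pos _)
  have hts : ∀ l, 0 < Real.tanh (s l / 2) := fun l => by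
    rw [Real.tanh_eq_sinh_div_cosh]
    exact div_pos (Real.sinh_pos_iff.2 (by linarith [hs l])) (Real.cosh_pos _)
  set T : ℝ := ∑ l, Real.tanh (s l / 2) with hT
  set Ti : ℝ := ∑ l, (Real.tanh (s l / 2))⁻¹ with hTi
  set R : ℝ := ∑ k, Real.tanh (r k / 2) with hR
  set Ri : ℝ := ∑ k, (Real.tanh (r k / 2))⁻¹ with hRi
  have hT0 : 0 ≤ T := Finset.sum_nonneg fun l _ => (hts l).le
  have hTi0 : 0 ≤ Ti := Finset.sum_nonneg fun l _ => (inv_pos.2 (hts l)).le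
  have hR0 : 0 ≤ R := Finset.sum_nonneg fun k _ => (htr k).le
  have hRi0 : 0 ≤ Ri := Finset.sum_nonneg fun k _ => (inv_pos.2 (htr k)).le
  have hκp0 : 0 < α + κp := by rw [hκp]; positivity
  have hκm0 : 0 < α + κm := by rw [hκm]; positivity
  -- the key two-sided estimate for any ordered pair
  have key : ∀ a b : Fin n, a ≠ b → ξ b ≤ ξ a →
      (α + κp) * (ξ a - ξ b) ≤ 2 * π * ((μ a : ℝ) - (μ b : ℝ)) ∧
      2 * π * ((μ a : ℝ) - (μ b : ℝ)) ≤ (α + κm) * (ξ a - ξ b) := by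
    intro a b hab hba
    have hn2 : 2 ≤ n := by
      have h1 : 1 < Fintype.card (Fin n) := Fintype.one_lt_card_iff.2 ⟨a, b, hab⟩
      simp at h1; omega
    set D : ℝ := ξ a - ξ b with hD
    have hD0 : 0 ≤ D := by rw [hD]; linarith
    set E : Finset (Fin n) := (Finset.univ.erase a).erase b with hE
    have hbmem : b ∈ Finset.univ.erase a := Finset.mem_erase.2 ⟨hab.symm, Finset.mem_univ b⟩
    have hamem : a ∈ Finset.univ.erase b := Finset.mem_erase.2 ⟨hab, Finset.mem_univ a⟩
    have hcardE : (E.card : ℝ) = (n : ℝ) - 2 := by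
      rw [hE, Finset.card_erase_of_mem hbmem, Finset.card_erase_of_mem (Finset.mem_univ a),
        Finset.card_univ, Fintype.card_fin]
      have h2 : n - 1 - 1 = n - 2 := by omega
      rw [h2, Nat.cast_sub hn2]
      norm_num
    -- split the interaction sums
    have hsplitA : (∑ j'' ∈ Finset.univ.erase a, ∑ l, vTrig (s l) (τ l) (ξ a - ξ j''))
        = (∑ l, vTrig (s l) (τ l) (ξ a - ξ b))
          + ∑ j'' ∈ E, ∑ l, vTrig (s l) (τ l) (ξ a - ξ j'') := by
      rw [hE, ← Finset.add_sum_erase _ _ hbmem]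
    have hsplitB : (∑ j'' ∈ Finset.univ.erase b, ∑ l, vTrig (s l) (τ l) (ξ b - ξ j''))
        = (∑ l, vTrig (s l) (τ l) (ξ b - ξ a))
          + ∑ j'' ∈ E, ∑ l, vTrig (s l) (τ l) (ξ b - ξ j'') := by
      rw [hE, Finset.erase_right_comm, ← Finset.add_sum_erase _ _ hamem]
    -- difference of equations
    have hEq : α * D
        + ((∑ k, vTrig (r k) (σ k) (ξ a)) - (∑ k, vTrig (r k) (σ k) (ξ b)))
        + ((∑ l, vTrig (s l) (τ l) (ξ a - ξ b)) - (∑ l, vTrig (s l) (τ l) (ξ b - ξ a)))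
        + (∑ j'' ∈ E, ((∑ l, vTrig (s l) (τ l) (ξ a - ξ j''))
            - (∑ l, vTrig (s l) (τ l) (ξ b - ξ j''))))
        = 2 * π * ((μ a : ℝ) - (μ b : ℝ)) := by
      have h1 := hξ a
      have h2 := hξ b
      rw [hsplitA] at h1
      rw [hsplitB] at h2
      rw [Finset.sum_sub_distrib, hD]
      linarith
    -- bounds for the one-body part
    have hRbd : R * D ≤ (∑ k, vTrig (r k) (σ k) (ξ a)) - (∑ k, vTrig (r k) (σ k) (ξ b)) ∧
        (∑ k, vTrig (r k) (σ k) (ξ a)) - (∑ k, vTrig (r k) (σ k) (ξ b)) ≤ Ri * D := by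
      rw [← Finset.sum_sub_distrib, hR, hRi, Finset.sum_mul, Finset.sum_mul]
      constructor
      · refine Finset.sum_le_sum fun k _ => ?_
        exact (vTrig_diff_bounds (hr k) (hσ k) hba).1
      · refine Finset.sum_le_sum fun k _ => ?_
        exact (vTrig_diff_bounds (hr k) (hσ k) hba).2
    -- bounds for the self pair
    have hselfbd : T * (2 * D) ≤ (∑ l, vTrig (s l) (τ l) (ξ a - ξ b))
          - (∑ l, vTrig (s l) (τ l) (ξ b - ξ a)) ∧
        (∑ l, vTrig (s l) (τ l) (ξ a - ξ b)) - (∑ l, vTrig (s l) (τ l) (ξ b - ξ a))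
          ≤ Ti * (2 * D) := by
      have harg : ξ b - ξ a ≤ ξ a - ξ b := by linarith
      have h2D : (ξ a - ξ b) - (ξ b - ξ a) = 2 * D := by rw [hD]; ring
      rw [← Finset.sum_sub_distrib, hT, hTi, Finset.sum_mul, Finset.sum_mul]
      constructor
      · refine Finset.sum_le_sum fun l _ => ?_
        have := (vTrig_diff_bounds (hs l) (hτ l) harg).1
        rw [h2D] at this; exact this
      · refine Finset.sum_le_sum fun l _ => ?_
        have := (vTrig_diff_bounds (hs l) (hτ l) harg).2
        rw [h2D] at this; exact this
    -- bounds for the other pairs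
    have hEbd : ((n : ℝ) - 2) * (T * D) ≤ ∑ j'' ∈ E, ((∑ l, vTrig (s l) (τ l) (ξ a - ξ j''))
          - (∑ l, vTrig (s l) (τ l) (ξ b - ξ j''))) ∧
        (∑ j'' ∈ E, ((∑ l, vTrig (s l) (τ l) (ξ a - ξ j''))
          - (∑ l, vTrig (s l) (τ l) (ξ b - ξ j'')))) ≤ ((n : ℝ) - 2) * (Ti * D) := by
      have hterm : ∀ j'' ∈ E, T * D ≤ (∑ l, vTrig (s l) (τ l) (ξ a - ξ j''))
          - (∑ l, vTrig (s l) (τ l) (ξ b - ξ j'')) := by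
        intro j'' _
        have harg : ξ b - ξ j'' ≤ ξ a - ξ j'' := by linarith
        have hDD : (ξ a - ξ j'') - (ξ b - ξ j'') = D := by rw [hD]; ring
        rw [← Finset.sum_sub_distrib, hT, Finset.sum_mul]
        refine Finset.sum_le_sum fun l _ => ?_
        have := (vTrig_diff_bounds (hs l) (hτ l) harg).1
        rw [hDD] at this; exact this
      have hterm' : ∀ j'' ∈ E, (∑ l, vTrig (s l) (τ l) (ξ a - ξ j''))
          - (∑ l, vTrig (s l) (τ l) (ξ b - ξ j'')) ≤ Ti * D := by
        intro j'' _
        have harg : ξ b - ξ j'' ≤ ξ a - ξ j'' := by linarith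
        have hDD : (ξ a - ξ j'') - (ξ b - ξ j'') = D := by rw [hD]; ring
        rw [← Finset.sum_sub_distrib, hTi, Finset.sum_mul]
        refine Finset.sum_le_sum fun l _ => ?_
        have := (vTrig_diff_bounds (hs l) (hτ l) harg).2
        rw [hDD] at this; exact this
      constructor
      · calc ((n : ℝ) - 2) * (T * D) = E.card • (T * D) := by
              rw [nsmul_eq_mul, hcardE]
          _ = ∑ _j'' ∈ E, (T * D) := (Finset.sum_const _).symm
          _ ≤ _ := Finset.sum_le_sum hterm
      · calc (∑ j'' ∈ E, ((∑ l, vTrig (s l) (τ l) (ξ a - ξ j''))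
              - (∑ l, vTrig (s l) (τ l) (ξ b - ξ j'')))) ≤ ∑ _j'' ∈ E, (Ti * D) :=
              Finset.sum_le_sum hterm'
          _ = E.card • (Ti * D) := Finset.sum_const _
          _ = ((n : ℝ) - 2) * (Ti * D) := by rw [nsmul_eq_mul, hcardE]
    have e1 : ((n : ℝ) - 2) * (T * D) + T * (2 * D) = (n : ℝ) * (T * D) := by ring
    have e2 : ((n : ℝ) - 2) * (Ti * D) + Ti * (2 * D) = (n : ℝ) * (Ti * D) := by ring
    have ep : (α + (R + (n : ℝ) * T)) * D = α * D + R * D + (n : ℝ) * (T * D) := by ring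
    have em : (α + (Ri + (n : ℝ) * Ti)) * D = α * D + Ri * D + (n : ℝ) * (Ti * D) := by ring
    constructor
    · rw [hκp, ep]; linarith [hRbd.1, hselfbd.1, hEbd.1]
    · rw [hκm, em]; linarith [hRbd.2, hselfbd.2, hEbd.2]
  -- now the conclusion
  intro j j' hjj'
  have hne : j ≠ j' := ne_of_lt hjj'
  have hμlt : μ j' < μ j := hμ j j' hjj'
  have hπ : (0:ℝ) < π := Real.pi_pos
  have hord : ξ j' ≤ ξ j := by
    by_contra h
    push_neg at h
    have h1 := (key j' j hne.symm h.le).1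
    have hμd : ((μ j' : ℝ) - (μ j : ℝ)) ≤ -1 := by
      have : (μ j' : ℝ) + 1 ≤ (μ j : ℝ) := by exact_mod_cast Int.add_one_le_iff.2 hμlt
      linarith
    have h2 : 0 < (α + κp) * (ξ j' - ξ j) := mul_pos hκp0 (by linarith)
    have h3 : 2 * π * ((μ j' : ℝ) - (μ j : ℝ)) ≤ 2 * π * (-1) :=
      mul_le_mul_of_nonneg_left hμd (by positivity)
    linarith
  have h1 := (key j j' hne hord).1
  have h2 := (key j j' hne hord).2
  constructor
  · rw [div_le_iff₀ hκm0]; linarith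
  · rw [le_div_iff₀ hκp0]; linarith
end
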